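/- Let A be a self-adjoint operator and M a bounded operator on a Hilbert space with M + M* ≥ 0 and ker M = ker((M+M*)/2). If Y satisfies M A Y = iμ Y for some real μ ≠ 0, then M A Y = 0, a contradiction; hence 0 is the only purely imaginary eigenvalue of M A. -/

import Mathlib

open RCLike ContinuousLinearMap Complex

lemma aux_form_zero_imp_ker
    {H : Type*} [NormedAddCommGroup H] [InnerProductSpace ℂ H] [CompleteSpace H]
    (S : H →L[ℂ] H) (hS : IsSelfAdjoint S)
    (hpos : ∀ x : H, 0 ≤ ((inner ℂ x (S x) : ℂ)).re)
    {x : H} (hx : ((inner ℂ x (S x) : ℂ)).re = 0) : S x = 0 := by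
  have hsymm : ∀ u v : H, (inner ℂ u (S v) : ℂ) = starRingEnd ℂ (inner ℂ v (S u)) := by
    intro u v
    have h1 : (inner ℂ (S u) v : ℂ) = inner ℂ u (S v) := hS.isSymmetric u v
    rw [← h1, ← inner_conj_symm]
  -- step 1: for all y, re ⟪y, S x⟫ = 0
  have key : ∀ y : H, ((inner ℂ y (S x) : ℂ)).re = 0 := by
    intro y
    set c : ℝ := ((inner ℂ y (S x) : ℂ)).re with hc
    set d : ℝ := ((inner ℂ y (S y) : ℂ)).re with hd
    have hd0 : 0 ≤ d := hpos y
    have hquad : ∀ t : ℝ, 0 ≤ 2 * t * c + t ^ 2 * d := by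
      intro t
      have h := hpos (x + (t : ℂ) • y)
      have hexp : (inner ℂ (x + (t : ℂ) • y) (S (x + (t : ℂ) • y)) : ℂ)
          = inner ℂ x (S x) + (t : ℂ) * inner ℂ x (S y)
            + (t : ℂ) * inner ℂ y (S x) + (t : ℂ) * (t : ℂ) * inner ℂ y (S y) := by
        simp only [map_add, map_smul, inner_add_left, inner_add_right, inner_smul_left,
          inner_smul_right, Complex.conj_ofReal]
        ring
      have hxy : (inner ℂ x (S y) : ℂ) = starRingEnd ℂ (inner ℂ y (S x)) := hsymm x y
      have : ((inner ℂ (x + (t : ℂ) • y) (S (x + (t : ℂ) • y)) : ℂ)).re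
          = 2 * t * c + t ^ 2 * d := by
        rw [hexp, hxy]
        have htt : ((t : ℂ) * (t : ℂ)) = ((t ^ 2 : ℝ) : ℂ) := by push_cast; ring
        rw [htt]
        simp only [Complex.add_re, Complex.mul_re, Complex.ofReal_re, Complex.ofReal_im,
          Complex.conj_re, Complex.conj_im, hx]
        ring
      linarith [h, this.symm.le]
    have hc0 : c = 0 := by
      rcases eq_or_lt_of_le hd0 with hd' | hd'
      · have h1 := hquad 1
        have h2 := hquad (-1)
        rw [← hd'] at h1 h2
        nlinarith
      · have h := hquad (-c / d)
        have heval : 2 * (-c / d) * c + (-c / d) ^ 2 * d = -c ^ 2 / d := by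
          field_simp
          ring
        rw [heval] at h
        have h3 : 0 ≤ -c ^ 2 := by
          have hm := mul_nonneg h hd'.le
          rwa [div_mul_cancel₀ _ (ne_of_gt hd')] at hm
        nlinarith [sq_nonneg c]
    exact hc0
  -- step 2: imaginary parts too, hence full inner ℂ products vanish
  have key2 : ∀ y : H, (inner ℂ y (S x) : ℂ) = 0 := by
    intro y
    have h1 := key y
    have h2 := key ((Complex.I : ℂ) • y)
    rw [inner_smul_left] at h2
    have : (starRingEnd ℂ Complex.I * inner ℂ y (S x)).re
        = ((inner ℂ y (S x) : ℂ)).im := by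
      simp [Complex.mul_re]
    rw [this] at h2
    exact Complex.ext h1 h2
  have := key2 (S x)
  rwa [inner_self_eq_zero] at this

/-- For `A` self-adjoint and `M` with positive semidefinite symmetric part and
`ker M = ker(M + M*)`, the operator `MA` has no nonzero purely imaginary
eigenvalue: `MAY = iμY` with `μ ≠ 0` real forces `MAY = 0` and `Y = 0`. -/
theorem no_nonzero_imaginary_eigenvalue
    {H : Type*} [NormedAddCommGroup H] [InnerProductSpace ℂ H] [CompleteSpace H]
    (A : H →ₗ[ℂ] H) (hA : LinearMap.IsSymmetric A)
    (M : H →L[ℂ] H)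
    (hsemi : ∀ x : H, 0 ≤ ((inner ℂ x ((M + adjoint M) x) : ℂ)).re)
    (hker : ∀ x : H, M x = 0 ↔ (M + adjoint M) x = 0) :
    ∀ (Y : H) (μ : ℝ), μ ≠ 0 → M (A Y) = ((μ : ℂ) * Complex.I) • Y →
      M (A Y) = 0 ∧ Y = 0 := by
  intro Y μ hμ heq
  set S : H →L[ℂ] H := M + adjoint M with hSdef
  have hSsa : IsSelfAdjoint S := by
    rw [IsSelfAdjoint, star_eq_adjoint, hSdef, map_add, adjoint_adjoint, add_comm]
  set x : H := A Y with hxdef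
  -- ⟪A Y, Y⟫ is real
  have hreal : ((inner ℂ x Y : ℂ)).im = 0 := by
    have h1 : (inner ℂ (A Y) Y : ℂ) = inner ℂ Y (A Y) := hA Y Y
    have h2 : (inner ℂ Y (A Y) : ℂ) = starRingEnd ℂ (inner ℂ (A Y) Y) := by
      rw [← inner_conj_symm]
    have : (inner ℂ (A Y) Y : ℂ) = starRingEnd ℂ (inner ℂ (A Y) Y) := h1.trans h2
    have := congrArg Complex.im this
    simp only [Complex.conj_im] at this
    linarith
  -- re ⟪x, M x⟫ = 0
  have hre : ((inner ℂ x (M x) : ℂ)).re = 0 := by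
    rw [heq, inner_smul_right]
    simp [Complex.mul_re, hreal]
  have hre2 : ((inner ℂ x (S x) : ℂ)).re = 0 := by
    have hadj : (inner ℂ x (adjoint M x) : ℂ) = starRingEnd ℂ (inner ℂ x (M x)) := by
      rw [ContinuousLinearMap.adjoint_inner_right, ← inner_conj_symm]
    have : (inner ℂ x (S x) : ℂ) = inner ℂ x (M x) + starRingEnd ℂ (inner ℂ x (M x)) := by
      rw [hSdef]
      simp only [ContinuousLinearMap.add_apply, inner_add_right, hadj]
    rw [this]
    simp only [Complex.add_re, Complex.conj_re, hre]
    norm_num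
  have hSx : S x = 0 := aux_form_zero_imp_ker S hSsa hsemi hre2
  have hMx : M x = 0 := (hker x).2 hSx
  have hY : Y = 0 := by
    have h0 : ((μ : ℂ) * Complex.I) • Y = 0 := by rw [← heq]; exact hMx
    rcases smul_eq_zero.mp h0 with h | h
    · exfalso
      apply hμ
      have := mul_eq_zero.mp h
      rcases this with h' | h'
      · exact_mod_cast h'
      · exact absurd h' Complex.I_ne_zero
    · exact h
  exact ⟨hMx, hY⟩
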